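/- Let F be a number field and i ≥ 1. Define μ^{(i)}(F) as the group of roots of unity ζ in an algebraic closure of F such that σ^i ζ = ζ for all σ ∈ Gal(F̄/F). Then μ^{(i)}(F) is finite. -/

import Mathlib

open Polynomial

/-- If all units of `ZMod n` satisfy `a ^ m = 1` with `m ≥ 1`, then `n ≤ 6 ^ m`. -/
lemma mu_aux_exponent_bound {n m : ℕ} (hn : 0 < n) (hm : 1 ≤ m)
    (h : ∀ a : (ZMod n)ˣ, a ^ m = 1) : n ≤ 6 ^ m := by
  have hnz : NeZero n := ⟨hn.ne'⟩
  have key : ∀ q c : ℕ, q ∣ n → Nat.Coprime c q → 2 ≤ c → q ≤ c ^ m := by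
    intro q c hq hco hc
    have hq0 : q ≠ 0 := by rintro rfl; exact hn.ne' (zero_dvd_iff.mp hq)
    have : NeZero q := ⟨hq0⟩
    obtain ⟨a, ha⟩ := ZMod.unitsMap_surjective hq (ZMod.unitOfCoprime c hco)
    have hb : (ZMod.unitOfCoprime c hco) ^ m = 1 := by
      rw [← ha, ← map_pow, h a, map_one]
    have hcast : ((c ^ m : ℕ) : ZMod q) = ((1 : ℕ) : ZMod q) := by
      have := congrArg (Units.val) hb
      push_cast
      simpa using this
    have hmod : (1 : ℕ) ≡ c ^ m [MOD q] := ((ZMod.natCast_eq_natCast_iff _ _ _).mp hcast).symm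
    have h1 : 1 ≤ c ^ m := Nat.one_le_pow _ _ (by omega)
    have hdvd : q ∣ c ^ m - 1 := (Nat.modEq_iff_dvd' h1).mp hmod
    have h2 : 2 ≤ c ^ m := by
      calc 2 = 2 ^ 1 := rfl
      _ ≤ c ^ m := Nat.pow_le_pow_left hc m |>.trans' (Nat.pow_le_pow_right (by norm_num) hm) |>.trans (le_refl _) |>.trans (le_refl _)
    have := Nat.le_of_dvd (by omega) hdvd
    omega
  set e := n.factorization 2 with he
  have hu_dvd : (n / 2 ^ e) ∣ n := Nat.ordCompl_dvd n 2
  have hu_odd : ¬ 2 ∣ (n / 2 ^ e) := Nat.not_dvd_ordCompl Nat.prime_two hn.ne'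
  have hco2 : Nat.Coprime 2 (n / 2 ^ e) := (Nat.prime_two.coprime_iff_not_dvd).mpr hu_odd
  have hu_le : n / 2 ^ e ≤ 2 ^ m := key _ 2 hu_dvd hco2 le_rfl
  have h2e_dvd : 2 ^ e ∣ n := Nat.ordProj_dvd n 2
  have hco3 : Nat.Coprime 3 (2 ^ e) := Nat.Coprime.pow_right e (by norm_num)
  have h2e_le : 2 ^ e ≤ 3 ^ m := key _ 3 h2e_dvd hco3 (by norm_num)
  have hsplit : 2 ^ e * (n / 2 ^ e) = n := Nat.ordProj_mul_ordCompl_eq_self n 2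
  calc n = 2 ^ e * (n / 2 ^ e) := hsplit.symm
    _ ≤ 3 ^ m * 2 ^ m := Nat.mul_le_mul h2e_le hu_le
    _ = 6 ^ m := by rw [← Nat.mul_pow]

section Galois

variable (F : Type*) [Field F] [NumberField F]

/-- The coercion from `F`-algebra automorphisms to ring automorphisms, as a monoid hom. -/
noncomputable def algAutToRingAut : (AlgebraicClosure F ≃ₐ[F] AlgebraicClosure F) →*
    (AlgebraicClosure F ≃+* AlgebraicClosure F) where
  toFun σ := σ.toRingEquiv
  map_one' := rfl
  map_mul' _ _ := rfl

lemma order_bound (i : ℕ) (hi : 1 ≤ i)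
    (ζ : AlgebraicClosure F) (n : ℕ) (hn : 0 < n) (hord : orderOf ζ = n)
    (hσ : ∀ σ : AlgebraicClosure F ≃ₐ[F] AlgebraicClosure F, (σ ^ i) ζ = ζ) :
    ∀ a : (ZMod n)ˣ, a ^ ((Module.finrank ℚ F).factorial * i) = 1 := by
  classical
  set d := Module.finrank ℚ F with hd
  have : NeZero n := ⟨hn.ne'⟩
  have hCZ : CharZero (AlgebraicClosure F) := charZero_of_injective_algebraMap (algebraMap F (AlgebraicClosure F)).injective
  have hprim : IsPrimitiveRoot ζ n := hord ▸ IsPrimitiveRoot.orderOf ζ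
  have hcard : Nat.card (rootsOfUnity n (AlgebraicClosure F)) = n := hprim.card_rootsOfUnity
  set χ : ((AlgebraicClosure F) ≃ₐ[F] (AlgebraicClosure F)) →* (ZMod n)ˣ :=
    (modularCyclotomicCharacter (AlgebraicClosure F) hcard).comp (algAutToRingAut F) with hχ
  -- the root of unity as an element of rootsOfUnity
  have hmem : hprim.toRootsOfUnity.val ∈ rootsOfUnity n (AlgebraicClosure F) := hprim.toRootsOfUnity.2
  have hval : ((hprim.toRootsOfUnity : (AlgebraicClosure F)ˣ) : (AlgebraicClosure F)) = ζ := hprim.val_toRootsOfUnity_coe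
  have hspec : ∀ σ : (AlgebraicClosure F) ≃ₐ[F] (AlgebraicClosure F), σ ζ = ζ ^ (χ σ : ZMod n).val := by
    intro σ
    have := modularCyclotomicCharacter.spec (AlgebraicClosure F) hcard (algAutToRingAut F σ) hmem
    rw [← hval]
    exact_mod_cast this
  -- every element of range χ has i-th power 1
  have hrange : ∀ x ∈ χ.range, x ^ i = 1 := by
    rintro x ⟨σ, rfl⟩
    have h1 : (σ ^ i) ζ = ζ ^ ((χ (σ ^ i)) : ZMod n).val := hspec (σ ^ i)
    rw [hσ σ] at h1
    have horder_u : orderOf ((hprim.toRootsOfUnity : (AlgebraicClosure F)ˣ)) = n := by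
      have h2 := orderOf_units (y := (hprim.toRootsOfUnity : (AlgebraicClosure F)ˣ))
      rw [hval] at h2
      rw [← h2, hord]
    have ht : (hprim.toRootsOfUnity : (AlgebraicClosure F)ˣ) ^ ((χ (σ ^ i)) : ZMod n).val
        = (hprim.toRootsOfUnity : (AlgebraicClosure F)ˣ) ^ 1 := by
      apply Units.ext
      rw [Units.val_pow_eq_pow_val, Units.val_pow_eq_pow_val, hval, pow_one, ← h1]
    have hmodeq : ((χ (σ ^ i)) : ZMod n).val ≡ 1 [MOD n] := by
      have h3 := pow_eq_pow_iff_modEq.mp ht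
      rwa [horder_u] at h3
    have : ((χ (σ ^ i)) : ZMod n) = 1 := by
      have h2 : (((χ (σ ^ i)) : ZMod n).val : ZMod n) = ((1 : ℕ) : ZMod n) :=
        (ZMod.natCast_eq_natCast_iff _ _ _).mpr hmodeq
      rwa [ZMod.natCast_rightInverse _, Nat.cast_one] at h2
    rw [← map_pow]
    exact Units.ext this
  -- counting: the degree of ζ over F is at most the card of the range
  have hintF : IsIntegral F ζ := Algebra.IsIntegral.isIntegral ζ
  set p := minpoly F ζ with hp
  have hsep : p.Separable := Algebra.IsSeparable.isSeparable F ζ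
  have hsplits : (p.map (algebraMap F (AlgebraicClosure F))).Splits := IsAlgClosed.splits _
  have hcardroot : Fintype.card (p.rootSet (AlgebraicClosure F)) = p.natDegree :=
    card_rootSet_eq_natDegree hsep hsplits
  -- every root is σ ζ for some automorphism σ
  have hroot : ∀ r ∈ p.rootSet (AlgebraicClosure F), ∃ σ : (AlgebraicClosure F) ≃ₐ[F] (AlgebraicClosure F), σ ζ = r := by
    intro r hr
    have := (Algebra.IsAlgebraic.range_eval_eq_rootSet_minpoly (F := F) (AlgebraicClosure F) ζ) ▸ hr
    obtain ⟨ψ, hψ⟩ := this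
    exact ⟨AlgEquiv.ofBijective ψ (Algebra.IsAlgebraic.algHom_bijective ψ), hψ⟩
  -- injection from rootSet into range χ
  have hinj : p.natDegree ≤ Nat.card χ.range := by
    choose s hs using hroot
    have : Function.Injective (fun r : p.rootSet (AlgebraicClosure F) => (⟨χ (s r r.2), ⟨_, rfl⟩⟩ : χ.range)) := by
      intro r₁ r₂ h12
      have e12 : χ (s r₁ r₁.2) = χ (s r₂ r₂.2) := congrArg Subtype.val h12
      have : (s r₁ r₁.2) ζ = (s r₂ r₂.2) ζ := by
        rw [hspec, hspec, e12]
      apply Subtype.ext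
      rw [← hs r₁ r₁.2, ← hs r₂ r₂.2, this]
    calc p.natDegree = Nat.card (p.rootSet (AlgebraicClosure F)) := by
          rw [Nat.card_eq_fintype_card, hcardroot]
      _ ≤ Nat.card χ.range := Nat.card_le_card_of_injective _ this
  -- totient n ≤ d * natDegree p
  have htot : n.totient ≤ d * p.natDegree := by
    set K := IntermediateField.adjoin F {ζ} with hK
    have t1 : IsScalarTower ℚ F K := IsScalarTower.of_algebraMap_eq' (Subsingleton.elim _ _)
    have t2 : IsScalarTower ℚ K (AlgebraicClosure F) :=
      IsScalarTower.of_algebraMap_eq' (Subsingleton.elim _ _)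
    have hKfd : FiniteDimensional F K := IntermediateField.adjoin.finiteDimensional hintF
    have hQfd : FiniteDimensional ℚ K := FiniteDimensional.trans ℚ F K
    have hζK : ζ ∈ K := IntermediateField.mem_adjoin_simple_self F ζ
    set ζK : K := ⟨ζ, hζK⟩ with hζKdef
    have hintZ : IsIntegral ℤ ζ := hprim.isIntegral hn
    have e1 : n.totient ≤ (minpoly ℤ ζ).natDegree := hprim.totient_le_degree_minpoly
    have e2 : (minpoly ℚ ζ).natDegree = (minpoly ℤ ζ).natDegree := by
      rw [minpoly.isIntegrallyClosed_eq_field_fractions' ℚ hintZ]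
      exact (minpoly.monic hintZ).natDegree_map _
    have e3 : minpoly ℚ ζ = minpoly ℚ ζK := by
      have : ζ = algebraMap K (AlgebraicClosure F) ζK := rfl
      rw [this, minpoly.algebraMap_eq (algebraMap K (AlgebraicClosure F)).injective]
    have e4 : (minpoly ℚ ζK).natDegree ∣ Module.finrank ℚ K :=
      minpoly.degree_dvd (Algebra.IsIntegral.isIntegral ζK)
    have e5 : Module.finrank ℚ K = d * Module.finrank F K :=
      (Module.finrank_mul_finrank ℚ F K).symm
    have e6 : Module.finrank F K = p.natDegree := IntermediateField.adjoin.finrank hintF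
    calc n.totient ≤ (minpoly ℤ ζ).natDegree := e1
      _ = (minpoly ℚ ζ).natDegree := e2.symm
      _ = (minpoly ℚ ζK).natDegree := by rw [e3]
      _ ≤ Module.finrank ℚ K := Nat.le_of_dvd Module.finrank_pos e4
      _ = d * p.natDegree := by rw [e5, e6]
  -- index of range χ in (ZMod n)ˣ is at most d
  have hcardH : 0 < Nat.card χ.range := Nat.card_pos
  have hindex : χ.range.index ≤ d := by
    have h1 : χ.range.index * Nat.card χ.range = Nat.card (ZMod n)ˣ :=
      Subgroup.index_mul_card χ.range
    have h2 : Nat.card (ZMod n)ˣ = n.totient := by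
      rw [Nat.card_eq_fintype_card, ZMod.card_units_eq_totient]
    have h3 : χ.range.index * Nat.card χ.range ≤ d * Nat.card χ.range := by
      rw [h1, h2]
      exact htot.trans (Nat.mul_le_mul_left d hinj)
    exact Nat.le_of_mul_le_mul_right h3 hcardH
  have hindexpos : 0 < χ.range.index := by
    have : χ.range.FiniteIndex := Subgroup.finiteIndex_of_finite_quotient
    exact Nat.pos_of_ne_zero Subgroup.FiniteIndex.index_ne_zero
  have hdvd : χ.range.index ∣ d.factorial := Nat.dvd_factorial hindexpos hindex
  intro a
  have hmem' : a ^ d.factorial ∈ χ.range := by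
    obtain ⟨k, hk⟩ := hdvd
    rw [hk, pow_mul]
    exact Subgroup.pow_mem _ (Subgroup.pow_index_mem χ.range a) k
  rw [pow_mul]
  exact hrange _ hmem'

end Galois

/-- For a number field `F` and `i ≥ 1`, the set
`μ^{(i)}(F) = {ζ ∈ μ(F̄) : σ^i ζ = ζ for all σ ∈ Gal(F̄/F)}` is finite. -/
theorem mu_i_finite (F : Type*) [Field F] [NumberField F] (i : ℕ) (hi : 1 ≤ i) :
    {ζ : AlgebraicClosure F | (∃ n : ℕ, 0 < n ∧ ζ ^ n = 1) ∧
      ∀ σ : AlgebraicClosure F ≃ₐ[F] AlgebraicClosure F, (σ ^ i) ζ = ζ}.Finite := by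
  classical
  set d := Module.finrank ℚ F with hd
  set m := d.factorial * i with hm
  have hm1 : 1 ≤ m := Nat.one_le_iff_ne_zero.mpr (by
    simp [hm, Nat.factorial_ne_zero, Nat.one_le_iff_ne_zero.mp hi])
  set B := 6 ^ m with hB
  set N := B.factorial with hN
  have hN1 : 1 ≤ N := Nat.one_le_iff_ne_zero.mpr (Nat.factorial_ne_zero B)
  have hsub : {ζ : AlgebraicClosure F | (∃ n : ℕ, 0 < n ∧ ζ ^ n = 1) ∧
      ∀ σ : AlgebraicClosure F ≃ₐ[F] AlgebraicClosure F, (σ ^ i) ζ = ζ} ⊆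
      {x : AlgebraicClosure F | (X ^ N - 1 : (AlgebraicClosure F)[X]).IsRoot x} := by
    rintro ζ ⟨⟨k, hk, hζk⟩, hσ⟩
    have hfin : IsOfFinOrder ζ := isOfFinOrder_iff_pow_eq_one.mpr ⟨k, hk, hζk⟩
    set n := orderOf ζ with hn
    have hnpos : 0 < n := hfin.orderOf_pos
    have hbound := order_bound F i hi ζ n hnpos rfl hσ
    have hnB : n ≤ B := mu_aux_exponent_bound hnpos hm1 hbound
    have hdvd : n ∣ N := Nat.dvd_factorial hnpos hnB
    have hpow : ζ ^ N = 1 := orderOf_dvd_iff_pow_eq_one.mp hdvd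
    simp only [Set.mem_setOf_eq, IsRoot, eval_sub, eval_pow, eval_X, eval_one, hpow, sub_self]
  refine Set.Finite.subset (Polynomial.finite_setOf_isRoot ?_) hsub
  have := Polynomial.X_pow_sub_C_ne_zero (n := N) (by omega) (1 : AlgebraicClosure F)
  simpa using this
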